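/- arXiv:2106.03622 — 2 statements merged into one kernel-verified Lean document; each statement's English description precedes it below -/
import Mathlib

section
/- Let g : ℝ × ℝ → ℝ × ℝ fix the horizontal axis pointwise (g (x, 0) = (x, 0) for all x : ℝ), let p = (a, 0), assume g is differentiable at p, and assume the determinant of the derivative of g at p is positive (LinearMap.det of the linear part of fderiv ℝ g p is > 0, i.e. g is orientation-preserving at p). Then the derivative of g at p preserves the upper half-plane of directions: for every vector v : ℝ × ℝ with v.2 > 0, one has (fderiv ℝ g p v).2 > 0. -/
/-- If g fixes the horizontal axis pointwise, is differentiable at p = (a, 0), and is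
orientation-preserving at p, then Dg_p maps vectors pointing up to vectors pointing up. -/
theorem fderiv_preserves_upper_halfplane (g : ℝ × ℝ → ℝ × ℝ)
    (hfix : ∀ x : ℝ, g (x, 0) = (x, 0)) (a : ℝ)
    (hdiff : DifferentiableAt ℝ g (a, 0))
    (hdet : 0 < LinearMap.det ((fderiv ℝ g (a, 0)).toLinearMap)) :
    ∀ v : ℝ × ℝ, 0 < v.2 → 0 < (fderiv ℝ g (a, 0) v).2 := by
  set D := fderiv ℝ g (a, 0) with hD
  -- Step 1: D (1,0) = (1,0)
  have hlin : HasFDerivAt (fun x : ℝ => ((x : ℝ), (0 : ℝ)))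
      ((ContinuousLinearMap.id ℝ ℝ).prod 0) a :=
    HasFDerivAt.prodMk (hasFDerivAt_id a) (hasFDerivAt_const 0 a)
  have hcomp : HasFDerivAt (fun x : ℝ => g (x, 0))
      (D.comp ((ContinuousLinearMap.id ℝ ℝ).prod 0)) a :=
    (hdiff.hasFDerivAt).comp a hlin
  have hfun : (fun x : ℝ => g (x, 0)) = fun x : ℝ => ((x : ℝ), (0 : ℝ)) :=
    funext hfix
  rw [hfun] at hcomp
  have huniq := hcomp.unique hlin
  have h10 : D (1, 0) = (1, 0) := by
    have := congrArg (fun L : ℝ →L[ℝ] ℝ × ℝ => L 1) huniq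
    simpa using this
  -- Step 2: det formula gives (D (0,1)).2 > 0
  have hmat : LinearMap.det D.toLinearMap =
      (D (1, 0)).1 * (D (0, 1)).2 - (D (0, 1)).1 * (D (1, 0)).2 := by
    rw [← LinearMap.det_toMatrix (Module.Basis.finTwoProd ℝ), Matrix.det_fin_two]
    simp [LinearMap.toMatrix_apply, Module.Basis.finTwoProd]
  have hpos : 0 < (D (0, 1)).2 := by
    rw [hmat, h10] at hdet
    simpa using hdet
  -- Step 3: conclude
  intro v hv
  obtain ⟨x, y⟩ := v
  have hvdec : ((x, y) : ℝ × ℝ) = x • ((1 : ℝ), (0 : ℝ)) + y • ((0 : ℝ), (1 : ℝ)) := by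
    simp
  simp only at hv
  rw [hvdec, map_add, map_smul, map_smul, h10]
  simp only [Prod.snd_add, Prod.smul_snd, smul_eq_mul]
  simpa using mul_pos hv hpos
end

section
/- Let X be a preconnected topological space equipped with a Borel measure μ, let h > 0 be a real number, and let s ⊆ X be a measurable set with μ s ≤ ENNReal.ofReal h. If f : X → ℝ is a continuous function with ∫ x in s, f x dμ > h and f attains the value 0 at some point of X, then f attains the value 1: there exists x ∈ X with f x = 1. -/
open MeasureTheory

/-- If a measurable set s has measure at most h > 0 and a continuous function f on a
preconnected Borel measure space vanishes somewhere and has integral greater than h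
over s, then f attains the value 1. -/
theorem exists_value_one_of_setIntegral_gt {X : Type*} [TopologicalSpace X]
    [MeasurableSpace X] [BorelSpace X]
    (μ : Measure X) (hX : IsPreconnected (Set.univ : Set X))
    (h : ℝ) (hh : 0 < h) (s : Set X) (hs : MeasurableSet s)
    (hμs : μ s ≤ ENNReal.ofReal h)
    (f : X → ℝ) (hf : Continuous f)
    (hint : ∫ x in s, f x ∂μ > h) (h0 : ∃ x, f x = 0) :
    ∃ x, f x = 1 := by
  obtain ⟨x0, hx0⟩ := h0
  have hμfin : μ s < ⊤ := lt_of_le_of_lt hμs ENNReal.ofReal_lt_top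
  -- f is integrable on s (else the integral would be 0 < h)
  have hint' : IntegrableOn f s μ := by
    by_contra hni
    rw [MeasureTheory.integral_undef hni] at hint
    linarith
  -- there is a point where f > 1
  have hgt : ∃ x, 1 < f x := by
    by_contra hle
    push_neg at hle
    have hle' : ∫ x in s, f x ∂μ ≤ ∫ _ in s, (1 : ℝ) ∂μ := by
      apply MeasureTheory.integral_mono hint' (integrableOn_const hμfin.ne)
      intro x; exact hle x
    rw [MeasureTheory.setIntegral_const, smul_eq_mul, mul_one] at hle'
    have : (μ s).toReal ≤ h := by
      rw [← ENNReal.toReal_ofReal hh.le]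
      exact ENNReal.toReal_mono ENNReal.ofReal_ne_top hμs
    change _ ≤ (μ s).toReal at hle'
    linarith
  obtain ⟨x1, hx1⟩ := hgt
  -- intermediate value via preconnectedness
  have himg : IsPreconnected (f '' Set.univ) := hX.image f hf.continuousOn
  have hoc : Set.OrdConnected (f '' Set.univ) := himg.ordConnected
  have h0mem : (0 : ℝ) ∈ f '' Set.univ := ⟨x0, Set.mem_univ _, hx0⟩
  have h1mem : f x1 ∈ f '' Set.univ := ⟨x1, Set.mem_univ _, rfl⟩
  have : (1 : ℝ) ∈ f '' Set.univ :=
    hoc.out h0mem h1mem ⟨zero_le_one, hx1.le⟩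
  obtain ⟨x, -, hx⟩ := this
  exact ⟨x, hx⟩
end
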